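/- Fix δ with 0 < δ < ρ − L and suppose that in Algorithm niAPG every inexact proximal step satisfies the sufficient-decrease condition F(x_{k+1}) ≤ F(v_k) − (δ/2)·‖x_{k+1} − v_k‖² for all k ≥ 1. Then for every k ≥ 1: Δ_{k+q+1} ≤ Δ_k − (δ/2)·min_{t = k,…,k+q} ‖x_{t+1} − v_t‖². -/
import Mathlib


/-- Proposition 9: decrease of `Δ` over a window, nonconvex inexact steps.
If every inexact proximal step satisfies the sufficient-decrease condition
`F x_{k+1} ≤ F v_k − (δ/2)‖x_{k+1} − v_k‖²` with `0 < δ < ρ − L`, then for every `k ≥ 1`,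
`Δ_{k+q+1} ≤ Δ_k − (δ/2) min_{t=k,…,k+q} ‖x_{t+1} − v_t‖²`. -/
theorem niAPG_nonconvex_Delta_decrease
    {E : Type*} [NormedAddCommGroup E] [InnerProductSpace ℝ E] [FiniteDimensional ℝ E]
    (f g F : E → ℝ) (f' : E → E) (L η ρ δ : ℝ)
    (hL : 0 < L)
    (hf : ∀ x, HasGradientAt f (f' x) x)
    (hlip : ∀ x y, ‖f' x - f' y‖ ≤ L * ‖x - y‖)
    (hg : LowerSemicontinuous g)
    (hF : ∀ x, F x = f x + g x)
    (hη : 0 < η) (hηL : η < 1 / L) (hρ : ρ = 1 / η)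
    (hδ : 0 < δ) (hδρ : δ < ρ - L)
    (q : ℕ) (x y v z : ℕ → E) (Δ : ℕ → ℝ)
    (hx01 : x 0 = x 1)
    (hy : ∀ k, 1 ≤ k → y k = x k + ((((k : ℝ) - 1) / ((k : ℝ) + 2)) • (x k - x (k - 1))))
    (hΔ : ∀ k, ∀ hk : 1 ≤ k, Δ k =
      (Finset.Icc (max 1 (k - q)) k).sup' (Finset.nonempty_Icc.mpr (by omega))
        (fun t => F (x t)))
    (hv : ∀ k, 1 ≤ k → v k = if F (y k) ≤ Δ k then y k else x k)
    (hz : ∀ k, 1 ≤ k → z k = v k - η • f' (v k))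
    (hdec : ∀ k, 1 ≤ k →
      F (x (k + 1)) ≤ F (v k) - (δ / 2) * ‖x (k + 1) - v k‖ ^ 2) :
    ∀ k, 1 ≤ k →
      Δ (k + q + 1) ≤ Δ k - (δ / 2) *
        (Finset.Icc k (k + q)).inf' (Finset.nonempty_Icc.mpr (by omega))
          (fun t => ‖x (t + 1) - v t‖ ^ 2) := by
  have hFv : ∀ t, 1 ≤ t → F (v t) ≤ Δ t := by
    intro t ht
    rw [hv t ht]
    split_ifs with h
    · exact h
    · rw [hΔ t ht]
      refine Finset.le_sup' (fun t => F (x t)) ?_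
      rw [Finset.mem_Icc]; omega
  have hFx : ∀ t, 1 ≤ t → F (x (t + 1)) ≤ Δ t := by
    intro t ht
    have h1 := hdec t ht
    have h2 := hFv t ht
    have hnn : 0 ≤ (δ / 2) * ‖x (t + 1) - v t‖ ^ 2 := by positivity
    linarith
  have hmono : ∀ t, 1 ≤ t → Δ (t + 1) ≤ Δ t := by
    intro t ht
    rw [hΔ (t + 1) (by omega)]
    apply Finset.sup'_le
    intro s hs
    rw [Finset.mem_Icc] at hs
    rcases eq_or_lt_of_le hs.2 with h | h
    · rw [h]; exact hFx t ht
    · rw [hΔ t ht]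
      refine Finset.le_sup' (fun t => F (x t)) ?_
      rw [Finset.mem_Icc]; omega
  have hmono' : ∀ k, 1 ≤ k → ∀ t, k ≤ t → Δ t ≤ Δ k := by
    intro k hk t ht
    induction t with
    | zero => omega
    | succ n ih =>
      rcases Nat.eq_or_lt_of_le ht with h | h
      · rw [h]
      · exact le_trans (hmono n (by omega)) (ih (by omega))
  intro k hk
  rw [hΔ (k + q + 1) (by omega)]
  apply Finset.sup'_le
  intro s hs
  rw [Finset.mem_Icc] at hs
  obtain ⟨hs1, hs2⟩ := hs
  obtain ⟨t, rfl⟩ : ∃ t, s = t + 1 := ⟨s - 1, by omega⟩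
  have h1 := hdec t (by omega)
  have h2 := hFv t (by omega)
  have h3 := hmono' k hk t (by omega)
  have h4 : (Finset.Icc k (k + q)).inf' (Finset.nonempty_Icc.mpr (by omega))
      (fun t => ‖x (t + 1) - v t‖ ^ 2) ≤ ‖x (t + 1) - v t‖ ^ 2 :=
    Finset.inf'_le _ (by rw [Finset.mem_Icc]; omega)
  have h5 := mul_le_mul_of_nonneg_left h4 (by positivity : (0:ℝ) ≤ δ / 2)
  linarith
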